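/- Two ¬-free weight constraint programs are strongly equivalent if and only if they have the same positive SE-models (SE-models in which only atoms appear). -/

import Mathlib

open scoped Classical

inductive Lit where
  | pos : ℕ → Lit
  | neg : ℕ → Lit
deriving DecidableEq

/-- A set of literals is consistent if it contains no complementary pair. -/
def Consistent (X : Set Lit) : Prop :=
  ∀ a : ℕ, ¬ (Lit.pos a ∈ X ∧ Lit.neg a ∈ X)

/-- A rule element: a literal or a literal prefixed with `not`. -/
inductive RElem where
  | pos : Lit → RElem
  | neg : Lit → RElem
deriving DecidableEq

def SatRE (X : Set Lit) : RElem → Prop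
  | RElem.pos l => l ∈ X
  | RElem.neg l => l ∉ X

/-- The literal of a rule element. -/
def reLit : RElem → Lit
  | RElem.pos l => l
  | RElem.neg l => l

/-- A weight constraint L ≤ S ≤ U, where S is a (multi)set of weight assignments
e = w (rule element, weight) and L, U are reals or ±∞. -/
structure WC where
  lb : EReal
  S : Multiset (RElem × ℝ)
  ub : EReal

/-- v(S,X): the sum of the weights of the assignments whose rule element X satisfies. -/
noncomputable def wval (X : Set Lit) (S : Multiset (RElem × ℝ)) : ℝ :=
  ((S.filter fun p => SatRE X p.1).map Prod.snd).sum

def SatWC (X : Set Lit) (C : WC) : Prop :=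
  C.lb ≤ (wval X C.S : EReal) ∧ (wval X C.S : EReal) ≤ C.ub

/-- A WCP rule C0 ← C1,...,Cn. -/
structure WRule where
  head : WC
  body : List WC

abbrev WProg := Set WRule

def isPosRE (p : RElem × ℝ) : Prop := ∃ l : Lit, p.1 = RElem.pos l

/-- In a weight constraint program, heads contain no negative rule elements. -/
def HeadPos (P : WProg) : Prop := ∀ r ∈ P, ∀ p ∈ r.head.S, isPosRE p

def SatWRule (X : Set Lit) (r : WRule) : Prop :=
  (∀ C ∈ r.body, SatWC X C) → SatWC X r.head

def SatWProg (X : Set Lit) (P : WProg) : Prop := ∀ r ∈ P, SatWRule X r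

/-- The reduct (L ≤ S)^X = L − v(S∖S', X) ≤ S', where S' is the positive part of S. -/
noncomputable def RedLS (X : Set Lit) (C : WC) : WC :=
  ⟨C.lb - (wval X (C.S.filter fun p => ¬ isPosRE p) : EReal),
    C.S.filter isPosRE, ⊤⟩

/-- The weight constraint 1 ≤ {l = 1}, representing the literal l. -/
noncomputable def litWC (l : Lit) : WC := ⟨(1 : EReal), {(RElem.pos l, (1 : ℝ))}, ⊤⟩

/-- The weight constraint 1 ≤ {not l = 1}, representing `not l`. -/
noncomputable def notWC (l : Lit) : WC := ⟨(1 : EReal), {(RElem.neg l, (1 : ℝ))}, ⊤⟩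

/-- ⊥, i.e. the weight constraint 1 ≤ {}. -/
noncomputable def botWC : WC := ⟨(1 : EReal), 0, ⊤⟩

/-- The reduct of a WCP rule with respect to X: all rules e ← (L1 ≤ S1)^X,...,(Ln ≤ Sn)^X
for head literals e with X ⊨ e and X ⊨ Si ≤ Ui for all i. -/
noncomputable def WReductRule (X : Set Lit) (r : WRule) : WProg :=
  {r' | ∃ l : Lit, (∃ w : ℝ, (RElem.pos l, w) ∈ r.head.S) ∧ l ∈ X ∧
    (∀ C ∈ r.body, (wval X C.S : EReal) ≤ C.ub) ∧
    r' = ⟨litWC l, r.body.map (RedLS X)⟩}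

noncomputable def WReductProg (X : Set Lit) (P : WProg) : WProg :=
  {r' | ∃ r ∈ P, r' ∈ WReductRule X r}

/-- X is an answer set for P if X ⊨ P and no proper subset of X satisfies P^X. -/
def AnswerSetW (X : Set Lit) (P : WProg) : Prop :=
  Consistent X ∧ SatWProg X P ∧
    ∀ Z : Set Lit, Z ⊂ X → ¬ SatWProg Z (WReductProg X P)

def SEModelW (P : WProg) (X Y : Set Lit) : Prop :=
  Consistent X ∧ Consistent Y ∧ X ⊆ Y ∧ SatWProg Y P ∧ SatWProg X (WReductProg Y P)

def StrongEqW (P Q : WProg) : Prop :=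
  ∀ R : WProg, HeadPos R →
    ∀ Y : Set Lit, AnswerSetW Y (P ∪ R) ↔ AnswerSetW Y (Q ∪ R)

/-- A weight constraint program is ¬-free if classical negation occurs nowhere in it. -/
def WProgNegFree (P : WProg) : Prop :=
  ∀ r ∈ P, (∀ p ∈ r.head.S, ∃ a : ℕ, reLit p.1 = Lit.pos a) ∧
    ∀ C ∈ r.body, ∀ p ∈ C.S, ∃ a : ℕ, reLit p.1 = Lit.pos a

def AtomsOnly (Z : Set Lit) : Prop := ∀ l ∈ Z, ∃ a, l = Lit.pos a


/-! ### Auxiliary lemmas -/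

lemma satWC_litWC (Z : Set Lit) (l : Lit) : SatWC Z (litWC l) ↔ l ∈ Z := by
  by_cases h : l ∈ Z <;>
    simp only [SatWC, litWC, wval] <;> rw [Multiset.filter_singleton] <;>
    simp [SatRE, h, le_top]

lemma redLS_litWC (Y : Set Lit) (m : Lit) : RedLS Y (litWC m) = litWC m := by
  have h : isPosRE (RElem.pos m, (1:ℝ)) := ⟨m, rfl⟩
  simp [RedLS, litWC, Multiset.filter_singleton, h, wval]

lemma mem_reduct_litWC (Y : Set Lit) (l : Lit) (body : List WC) (r' : WRule) :
    r' ∈ WReductRule Y ⟨litWC l, body⟩ ↔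
      l ∈ Y ∧ (∀ C ∈ body, (wval Y C.S : EReal) ≤ C.ub) ∧
        r' = ⟨litWC l, body.map (RedLS Y)⟩ := by
  constructor
  · rintro ⟨l', ⟨w, hw⟩, hlY, hub, rfl⟩
    simp only [litWC, Multiset.mem_singleton, Prod.mk.injEq, RElem.pos.injEq] at hw
    obtain ⟨rfl, -⟩ := hw
    exact ⟨hlY, hub, rfl⟩
  · rintro ⟨h1, h2, rfl⟩
    exact ⟨l, ⟨1, by simp [litWC]⟩, h1, h2, rfl⟩

lemma sat_reduct_self (Y : Set Lit) (P : WProg) : SatWProg Y (WReductProg Y P) := by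
  rintro r' ⟨r, hr, l, hl, hlY, hub, rfl⟩ _
  exact (satWC_litWC Y l).mpr hlY

lemma reduct_union (Y : Set Lit) (P R : WProg) :
    WReductProg Y (P ∪ R) = WReductProg Y P ∪ WReductProg Y R := by
  ext r'
  simp only [WReductProg, Set.mem_setOf_eq, Set.mem_union]
  constructor
  · rintro ⟨r, hr | hr, h⟩
    exacts [Or.inl ⟨r, hr, h⟩, Or.inr ⟨r, hr, h⟩]
  · rintro (⟨r, hr, h⟩ | ⟨r, hr, h⟩)
    exacts [⟨r, Or.inl hr, h⟩, ⟨r, Or.inr hr, h⟩]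

lemma consistent_mono {Z Y : Set Lit} (h : Z ⊆ Y) (hY : Consistent Y) : Consistent Z :=
  fun a hc => hY a ⟨h hc.1, h hc.2⟩

lemma atomsOnly_consistent {Z : Set Lit} (h : AtomsOnly Z) : Consistent Z := by
  rintro a ⟨-, h2⟩
  obtain ⟨b, hb⟩ := h _ h2
  cases hb

/-- The positive (atoms-only) part of a set of literals. -/
def pp (Z : Set Lit) : Set Lit := {l | l ∈ Z ∧ ∃ a, l = Lit.pos a}

lemma pp_atoms (Z : Set Lit) : AtomsOnly (pp Z) := fun _ h => h.2

lemma pp_mono {X Y : Set Lit} (h : X ⊆ Y) : pp X ⊆ pp Y := fun l hl => ⟨h hl.1, hl.2⟩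

lemma mem_pp_pos (Z : Set Lit) (a : ℕ) : Lit.pos a ∈ pp Z ↔ Lit.pos a ∈ Z :=
  ⟨fun h => h.1, fun h => ⟨h, a, rfl⟩⟩

lemma satRE_pp (Z : Set Lit) (p : RElem) (h : ∃ a, reLit p = Lit.pos a) :
    SatRE (pp Z) p ↔ SatRE Z p := by
  obtain ⟨a, ha⟩ := h
  cases p with
  | pos l =>
    simp only [reLit] at ha; subst ha
    exact mem_pp_pos Z a
  | neg l =>
    simp only [reLit] at ha; subst ha
    exact not_congr (mem_pp_pos Z a)

lemma wval_pp (Z : Set Lit) (S : Multiset (RElem × ℝ))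
    (h : ∀ p ∈ S, ∃ a, reLit p.1 = Lit.pos a) : wval (pp Z) S = wval Z S := by
  unfold wval
  rw [Multiset.filter_congr fun p hp => satRE_pp Z p.1 (h p hp)]

lemma satWC_pp (Z : Set Lit) (C : WC) (h : ∀ p ∈ C.S, ∃ a, reLit p.1 = Lit.pos a) :
    SatWC (pp Z) C ↔ SatWC Z C := by
  unfold SatWC
  rw [wval_pp Z C.S h]

/-- A single ¬-free rule. -/
def RNF (r : WRule) : Prop :=
  (∀ p ∈ r.head.S, ∃ a : ℕ, reLit p.1 = Lit.pos a) ∧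
    ∀ C ∈ r.body, ∀ p ∈ C.S, ∃ a : ℕ, reLit p.1 = Lit.pos a

lemma satWRule_pp (Z : Set Lit) (r : WRule) (h : RNF r) :
    SatWRule (pp Z) r ↔ SatWRule Z r := by
  unfold SatWRule
  have hb : (∀ C ∈ r.body, SatWC (pp Z) C) ↔ ∀ C ∈ r.body, SatWC Z C :=
    forall₂_congr fun C hC => satWC_pp Z C (h.2 C hC)
  rw [hb, satWC_pp Z r.head h.1]

lemma satWProg_pp (Z : Set Lit) (P : WProg) (h : ∀ r ∈ P, RNF r) :
    SatWProg (pp Z) P ↔ SatWProg Z P :=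
  forall₂_congr fun r hr => satWRule_pp Z r (h r hr)

lemma redLS_pp (Y : Set Lit) (C : WC) (h : ∀ p ∈ C.S, ∃ a, reLit p.1 = Lit.pos a) :
    RedLS (pp Y) C = RedLS Y C := by
  unfold RedLS
  rw [wval_pp Y _ fun p hp => h p (Multiset.mem_filter.mp hp).1]

lemma reduct_pp (Y : Set Lit) (P : WProg) (h : WProgNegFree P) :
    WReductProg (pp Y) P = WReductProg Y P := by
  ext r'
  constructor
  · rintro ⟨r, hr, l, ⟨w, hw⟩, hlY, hub, rfl⟩
    obtain ⟨a, ha⟩ := (h r hr).1 _ hw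
    simp only [reLit] at ha; subst ha
    refine ⟨r, hr, Lit.pos a, ⟨w, hw⟩, (mem_pp_pos Y a).mp hlY, ?_, ?_⟩
    · intro C hC
      rw [← wval_pp Y C.S ((h r hr).2 C hC)]
      exact hub C hC
    · congr 1
      exact List.map_congr_left fun C hC => redLS_pp Y C ((h r hr).2 C hC)
  · rintro ⟨r, hr, l, ⟨w, hw⟩, hlY, hub, rfl⟩
    obtain ⟨a, ha⟩ := (h r hr).1 _ hw
    simp only [reLit] at ha; subst ha
    refine ⟨r, hr, Lit.pos a, ⟨w, hw⟩, (mem_pp_pos Y a).mpr hlY, ?_, ?_⟩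
    · intro C hC
      rw [wval_pp Y C.S ((h r hr).2 C hC)]
      exact hub C hC
    · congr 1
      exact List.map_congr_left fun C hC => (redLS_pp Y C ((h r hr).2 C hC)).symm

lemma reduct_rnf (Y : Set Lit) (P : WProg) (h : WProgNegFree P) :
    ∀ r' ∈ WReductProg Y P, RNF r' := by
  rintro r' ⟨r, hr, l, ⟨w, hw⟩, hlY, hub, rfl⟩
  obtain ⟨a, ha⟩ := (h r hr).1 _ hw
  simp only [reLit] at ha
  constructor
  · intro p hp
    simp only [litWC, Multiset.mem_singleton] at hp
    subst hp
    exact ⟨a, ha⟩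
  · intro C hC p hp
    simp only [List.mem_map] at hC
    obtain ⟨C0, hC0, rfl⟩ := hC
    simp only [RedLS] at hp
    exact (h r hr).2 C0 hC0 p (Multiset.mem_filter.mp hp).1

lemma seModel_pp (P : WProg) (h : WProgNegFree P) (X Y : Set Lit) :
    SEModelW P X Y ↔
      Consistent X ∧ Consistent Y ∧ X ⊆ Y ∧ SEModelW P (pp X) (pp Y) := by
  have h1 : SatWProg (pp Y) P ↔ SatWProg Y P := satWProg_pp Y P h
  have h2 : WReductProg (pp Y) P = WReductProg Y P := reduct_pp Y P h
  have h3 : SatWProg (pp X) (WReductProg Y P) ↔ SatWProg X (WReductProg Y P) :=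
    satWProg_pp X _ (reduct_rnf Y P h)
  unfold SEModelW
  constructor
  · rintro ⟨cX, cY, sXY, sY, sX⟩
    refine ⟨cX, cY, sXY, atomsOnly_consistent (pp_atoms X), atomsOnly_consistent (pp_atoms Y),
      pp_mono sXY, h1.mpr sY, ?_⟩
    rw [h2]
    exact h3.mpr sX
  · rintro ⟨cX, cY, sXY, -, -, -, sY, sX⟩
    rw [h2] at sX
    exact ⟨cX, cY, sXY, h1.mp sY, h3.mp sX⟩

lemma backward_core (P Q R : WProg)
    (hfull : ∀ X Y : Set Lit, SEModelW P X Y → SEModelW Q X Y)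
    (hfull' : ∀ X Y : Set Lit, SEModelW Q X Y → SEModelW P X Y)
    (Y : Set Lit) (h : AnswerSetW Y (P ∪ R)) : AnswerSetW Y (Q ∪ R) := by
  obtain ⟨cY, hsat, hmin⟩ := h
  have hYP : SatWProg Y P := fun r hr => hsat r (Set.mem_union_left _ hr)
  have hYR : SatWProg Y R := fun r hr => hsat r (Set.mem_union_right _ hr)
  have hYQ : SatWProg Y Q :=
    (hfull Y Y ⟨cY, cY, subset_rfl, hYP, sat_reduct_self Y P⟩).2.2.2.1
  refine ⟨cY, ?_, ?_⟩
  · rintro r (hr | hr)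
    exacts [hYQ r hr, hYR r hr]
  · intro Z hZY hZ
    rw [reduct_union] at hZ
    have hZQ : SatWProg Z (WReductProg Y Q) := fun r hr => hZ r (Set.mem_union_left _ hr)
    have hZR : SatWProg Z (WReductProg Y R) := fun r hr => hZ r (Set.mem_union_right _ hr)
    have hZP : SatWProg Z (WReductProg Y P) :=
      (hfull' Z Y ⟨consistent_mono hZY.subset cY, cY, hZY.subset, hYQ, hZQ⟩).2.2.2.2
    refine hmin Z hZY ?_
    rw [reduct_union]
    rintro r (hr | hr)
    exacts [hZP r hr, hZR r hr]

lemma forward_core (P Q : WProg) (hse : StrongEqW P Q) (X Y : Set Lit)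
    (hX : AtomsOnly X) (hY : AtomsOnly Y) (h : SEModelW P X Y) : SEModelW Q X Y := by
  obtain ⟨cX, cY, sXY, hYP, hXP⟩ := h
  -- Step 1: Y ⊨ Q, using the context consisting of all facts of Y.
  set R1 : WProg := {r | ∃ l ∈ Y, r = ⟨litWC l, []⟩} with hR1def
  have hR1 : HeadPos R1 := by
    rintro r ⟨l, hl, rfl⟩ p hp
    simp only [litWC, Multiset.mem_singleton] at hp
    subst hp
    exact ⟨l, rfl⟩
  have hAS1 : AnswerSetW Y (P ∪ R1) := by
    refine ⟨cY, ?_, ?_⟩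
    · rintro r (hr | ⟨l, hl, rfl⟩)
      · exact hYP r hr
      · intro _
        exact (satWC_litWC Y l).mpr hl
    · intro Z hZY hZ
      have hYZ : Y ⊆ Z := by
        intro l hl
        have hmem : (⟨litWC l, []⟩ : WRule) ∈ WReductProg Y (P ∪ R1) :=
          ⟨⟨litWC l, []⟩, Set.mem_union_right _ ⟨l, hl, rfl⟩,
            (mem_reduct_litWC Y l [] _).mpr ⟨hl, by simp, by simp⟩⟩
        exact (satWC_litWC Z l).mp (hZ _ hmem (by simp))
      exact hZY.ne (Set.Subset.antisymm hZY.subset hYZ)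
  have hYQ : SatWProg Y Q := fun r hr =>
    ((hse R1 hR1 Y).mp hAS1).2.1 r (Set.mem_union_left _ hr)
  refine ⟨cX, cY, sXY, hYQ, ?_⟩
  -- Step 2: X ⊨ Q^Y.
  by_contra hXQ
  have hXY : X ≠ Y := by
    rintro rfl
    exact hXQ (sat_reduct_self X Q)
  set R2 : WProg := {r | (∃ l ∈ X, r = ⟨litWC l, []⟩) ∨
      ∃ l, l ∈ Y ∧ l ∉ X ∧ ∃ m, m ∈ Y ∧ m ∉ X ∧ r = ⟨litWC l, [litWC m]⟩} with hR2def
  have hR2 : HeadPos R2 := by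
    rintro r (⟨l, hl, rfl⟩ | ⟨l, hl, hlx, m, hm, hmx, rfl⟩) p hp <;>
    · simp only [litWC, Multiset.mem_singleton] at hp
      subst hp
      exact ⟨_, rfl⟩
  have hAS2 : AnswerSetW Y (Q ∪ R2) := by
    refine ⟨cY, ?_, ?_⟩
    · rintro r (hr | (⟨l, hl, rfl⟩ | ⟨l, hl, hlx, m, hm, hmx, rfl⟩))
      · exact hYQ r hr
      · intro _
        exact (satWC_litWC Y l).mpr (sXY hl)
      · intro _
        exact (satWC_litWC Y l).mpr hl
    · intro Z hZY hZ
      rw [reduct_union] at hZ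
      have hZQ : SatWProg Z (WReductProg Y Q) := fun r hr => hZ r (Set.mem_union_left _ hr)
      have hXZ : X ⊆ Z := by
        intro l hl
        have hmem : (⟨litWC l, []⟩ : WRule) ∈ WReductProg Y R2 :=
          ⟨⟨litWC l, []⟩, Or.inl ⟨l, hl, rfl⟩,
            (mem_reduct_litWC Y l [] _).mpr ⟨sXY hl, by simp, by simp⟩⟩
        exact (satWC_litWC Z l).mp (hZ _ (Set.mem_union_right _ hmem) (by simp))
      by_cases hcase : ∃ m, m ∈ Y ∧ m ∉ X ∧ m ∈ Z
      · obtain ⟨m, hmY, hmX, hmZ⟩ := hcase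
        have hYZ : Y ⊆ Z := by
          intro l hl
          by_cases hlX : l ∈ X
          · exact hXZ hlX
          · have hmem : (⟨litWC l, [litWC m]⟩ : WRule) ∈ WReductProg Y R2 := by
              refine ⟨⟨litWC l, [litWC m]⟩, Or.inr ⟨l, hl, hlX, m, hmY, hmX, rfl⟩,
                (mem_reduct_litWC Y l [litWC m] _).mpr ⟨hl, ?_, ?_⟩⟩
              · intro C hC
                simp only [List.mem_singleton] at hC
                subst hC
                exact le_top
              · simp [redLS_litWC]
            have hbody : ∀ C ∈ (⟨litWC l, [litWC m]⟩ : WRule).body, SatWC Z C := by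
              intro C hC
              simp only [List.mem_singleton] at hC
              subst hC
              exact (satWC_litWC Z m).mpr hmZ
            exact (satWC_litWC Z l).mp (hZ _ (Set.mem_union_right _ hmem) hbody)
        exact hZY.ne (Set.Subset.antisymm hZY.subset hYZ)
      · push_neg at hcase
        have hZX : Z ⊆ X := by
          intro l hl
          by_contra hlX
          exact hcase l (hZY.subset hl) hlX hl
        have hZeq : Z = X := Set.Subset.antisymm hZX hXZ
        exact hXQ (hZeq ▸ hZQ)
  have hAS2' := (hse R2 hR2 Y).mpr hAS2
  refine hAS2'.2.2 X (HasSubset.Subset.ssubset_of_ne sXY hXY) ?_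
  rw [reduct_union]
  rintro r' (hr' | ⟨r, hr | hr, hred⟩)
  · exact hXP r' hr'
  · obtain ⟨l, hl, rfl⟩ := hr
    rw [mem_reduct_litWC] at hred
    obtain ⟨-, -, rfl⟩ := hred
    intro _
    exact (satWC_litWC X l).mpr hl
  · obtain ⟨l, hlY, hlX, m, hmY, hmX, rfl⟩ := hr
    rw [mem_reduct_litWC] at hred
    obtain ⟨-, -, rfl⟩ := hred
    intro hbody
    exfalso
    have hb := hbody (RedLS Y (litWC m)) (by simp)
    rw [redLS_litWC] at hb
    exact hmX ((satWC_litWC X m).mp hb)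

/-- ¬-free weight constraint programs are strongly equivalent iff they
have the same positive SE-models. -/
theorem stmt14 (P Q : WProg) (hP : HeadPos P) (hQ : HeadPos Q)
    (hPnf : WProgNegFree P) (hQnf : WProgNegFree Q) :
    StrongEqW P Q ↔
      ∀ X Y : Set Lit, AtomsOnly X → AtomsOnly Y →
        (SEModelW P X Y ↔ SEModelW Q X Y) := by
  constructor
  · intro hse X Y hX hY
    have hse' : StrongEqW Q P := fun R hR Y' => (hse R hR Y').symm
    exact ⟨forward_core P Q hse X Y hX hY, forward_core Q P hse' X Y hX hY⟩
  · intro hpos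
    have hfull : ∀ X Y : Set Lit, SEModelW P X Y ↔ SEModelW Q X Y := by
      intro X Y
      rw [seModel_pp P hPnf X Y, seModel_pp Q hQnf X Y,
        hpos (pp X) (pp Y) (pp_atoms X) (pp_atoms Y)]
    intro R hR Y
    exact ⟨backward_core P Q R (fun X Y => (hfull X Y).mp) (fun X Y => (hfull X Y).mpr) Y,
      backward_core Q P R (fun X Y => (hfull X Y).mpr) (fun X Y => (hfull X Y).mp) Y⟩
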